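/- Let n ≥ 2 and m ≥ 1 be integers, let 1 < p < n be a real number and set p' = p/(p-1). Then ∫_{ℝ^{n+m}} |y|^{p'} (1 + |y|^{p'})^{-n - m/p'} dy = ((n+m)(p-1)/(n-p)) · ∫_{ℝ^{n+m}} (1 + |y|^{p'})^{-n - m/p'} dy, where |y| is the Euclidean norm on ℝ^{n+m}; in particular the left-hand integral is finite. -/

import Mathlib

open Real MeasureTheory Set

lemma aux_int (N : ℕ) (hN : 1 ≤ N) {q s c : ℝ} (hq : 0 < q) (hc : 0 ≤ c) (hs : 0 < s)
    (h : (N : ℝ) + c < q * s) :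
    IntegrableOn (fun r : ℝ => r ^ (N - 1) * (r ^ c * (1 + r ^ q) ^ (-s))) (Set.Ioi 0) := by
  have hmeas : Measurable fun r : ℝ => r ^ (N - 1) * (r ^ c * (1 + r ^ q) ^ (-s)) :=
by fun_prop
  rw [← Set.Ioc_union_Ioi_eq_Ioi (zero_le_one : (0:ℝ) ≤ 1)]
  refine IntegrableOn.union ?_ ?_
  · refine Integrable.mono' (g := fun _ => (1:ℝ))
      (integrableOn_const measure_Ioc_lt_top.ne) hmeas.aestronglyMeasurable ?_
    filter_upwards [ae_restrict_mem measurableSet_Ioc] with r hr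
    have h0 : (0:ℝ) < r := hr.1
    have h1 : r ≤ 1 := hr.2
    have a1 : r ^ (N - 1) ≤ 1 := pow_le_one₀ h0.le h1
    have a2 : r ^ c ≤ 1 := Real.rpow_le_one h0.le h1 hc
    have a3 : (1 + r ^ q) ^ (-s) ≤ 1 :=
      Real.rpow_le_one_of_one_le_of_nonpos
        (by nlinarith [Real.rpow_nonneg h0.le q]) (neg_nonpos.2 hs.le)
    have b1 : (0:ℝ) ≤ r ^ (N - 1) := by positivity
    have b2 : (0:ℝ) ≤ r ^ c := Real.rpow_nonneg h0.le c
    have b3 : (0:ℝ) ≤ (1 + r ^ q) ^ (-s) := Real.rpow_nonneg (by positivity) _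
    rw [Real.norm_eq_abs, abs_of_nonneg (by positivity)]
    have : r ^ c * (1 + r ^ q) ^ (-s) ≤ 1 * 1 := mul_le_mul a2 a3 b3 zero_le_one
    nlinarith
  · refine Integrable.mono' (g := fun r : ℝ => r ^ ((N:ℝ) - 1 + c - q * s))
      (integrableOn_Ioi_rpow_of_lt (by linarith) one_pos) hmeas.aestronglyMeasurable ?_
    filter_upwards [ae_restrict_mem measurableSet_Ioi] with r hr
    have h0 : (0:ℝ) < r := lt_trans one_pos hr
    have hrq : (0:ℝ) < r ^ q := Real.rpow_pos_of_pos h0 q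
    have e1 : r ^ (N - 1) = r ^ ((N:ℝ) - 1) := by
      rw [← Real.rpow_natCast r (N - 1), Nat.cast_sub hN, Nat.cast_one]
    have a3 : (1 + r ^ q) ^ (-s) ≤ (r ^ q) ^ (-s) :=
      Real.rpow_le_rpow_of_nonpos hrq (by linarith) (neg_nonpos.2 hs.le)
    have e2 : (r ^ q) ^ (-s) = r ^ (q * (-s)) := (Real.rpow_mul h0.le q (-s)).symm
    rw [Real.norm_eq_abs, abs_of_nonneg (by positivity)]
    calc r ^ (N - 1) * (r ^ c * (1 + r ^ q) ^ (-s))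
        ≤ r ^ ((N:ℝ) - 1) * (r ^ c * r ^ (q * (-s))) := by
          rw [e1, ← e2]
          refine mul_le_mul_of_nonneg_left (mul_le_mul_of_nonneg_left a3
            (Real.rpow_nonneg h0.le c)) (Real.rpow_nonneg h0.le _)
      _ = r ^ ((N:ℝ) - 1 + c - q * s) := by
          rw [← Real.rpow_add h0, ← Real.rpow_add h0]; ring_nf

lemma aux_eq (N : ℕ) (hN : 1 ≤ N) {q s : ℝ} (hq : 1 < q) (hs : (N : ℝ) < q * (s - 1)) :
    ∫ r in Ioi (0:ℝ), r ^ (N - 1) * (r ^ q * (1 + r ^ q) ^ (-s)) =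
      ((N : ℝ) / (q * (s - 1) - N)) * ∫ r in Ioi (0:ℝ), r ^ (N - 1) * (1 + r ^ q) ^ (-s) := by
  have hq0 : (0:ℝ) < q := lt_trans one_pos hq
  have hN1 : (1:ℝ) ≤ (N:ℝ) := by exact_mod_cast hN
  have hs1 : 1 < s := by nlinarith
  have hI : IntegrableOn (fun r : ℝ => r ^ (N - 1) * (r ^ q * (1 + r ^ q) ^ (-s))) (Ioi 0) :=
    aux_int N hN hq0 hq0.le (by linarith) (by nlinarith)
  have hJ : IntegrableOn (fun r : ℝ => r ^ (N - 1) * (1 + r ^ q) ^ (-s)) (Ioi 0) := by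
    have := aux_int N hN (c := 0) hq0 le_rfl (by linarith : (0:ℝ) < s) (by nlinarith)
    refine this.congr_fun (fun r hr => ?_) measurableSet_Ioi
    simp only [Real.rpow_zero, one_mul]
  set g : ℝ → ℝ := fun r => (N:ℝ) * (r ^ (N - 1) * (1 + r ^ q) ^ (-s)) +
      ((N:ℝ) - q * (s - 1)) * (r ^ (N - 1) * (r ^ q * (1 + r ^ q) ^ (-s))) with hg
  set F : ℝ → ℝ := fun r => r ^ N * (1 + r ^ q) ^ (1 - s) with hF
  have hderiv : ∀ r ∈ Ioi (0:ℝ), HasDerivAt F (g r) r := by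
    intro r hr
    have hr0 : (0:ℝ) < r := hr
    have hbase : (0:ℝ) < 1 + r ^ q := by positivity
    have h1 : HasDerivAt (fun x : ℝ => x ^ N) ((N:ℝ) * r ^ (N - 1)) r := hasDerivAt_pow N r
    have h2 : HasDerivAt (fun x : ℝ => 1 + x ^ q) (q * r ^ (q - 1)) r := by
      have := Real.hasDerivAt_rpow_const (x := r) (p := q) (Or.inl hr0.ne')
      exact this.const_add 1
    have h3 := h2.rpow_const (p := 1 - s) (Or.inl hbase.ne')
    have h4 : HasDerivAt (fun x : ℝ => x ^ N * (1 + x ^ q) ^ (1 - s)) _ r := h1.mul h3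
    convert h4 using 1
    obtain ⟨k, rfl⟩ : ∃ k, N = k + 1 := ⟨N - 1, (Nat.succ_pred_eq_of_pos hN).symm⟩
    simp only [hg, Nat.add_sub_cancel]
    have e1 : (1 + r ^ q) ^ (1 - s) = (1 + r ^ q) * (1 + r ^ q) ^ (-s) := by
      rw [show (1:ℝ) - s = 1 + (-s) by ring, Real.rpow_add hbase, Real.rpow_one]
    have e2 : (1 + r ^ q) ^ (1 - s - 1) = (1 + r ^ q) ^ (-s) := by norm_num
    have e3 : r ^ (q - 1) = r ^ q / r := by
      rw [Real.rpow_sub hr0, Real.rpow_one]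
    rw [e1, e2, e3, pow_succ]
    field_simp
    push_cast
    ring_nf
  have ha : (0:ℝ) < q * (s - 1) - N := by linarith
  have htop : Filter.Tendsto F Filter.atTop (nhds 0) := by
    apply squeeze_zero' (g := fun r : ℝ => r ^ (-(q * (s - 1) - N)))
    · filter_upwards [Filter.eventually_ge_atTop (1:ℝ)] with r hr
      have hr0 : (0:ℝ) < r := lt_of_lt_of_le one_pos hr
      have hbase : (0:ℝ) < 1 + r ^ q := by positivity
      positivity
    · filter_upwards [Filter.eventually_ge_atTop (1:ℝ)] with r hr
      have hr0 : (0:ℝ) < r := lt_of_lt_of_le one_pos hr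
      have hrq : (0:ℝ) < r ^ q := Real.rpow_pos_of_pos hr0 q
      have a1 : (1 + r ^ q) ^ (1 - s) ≤ (r ^ q) ^ (1 - s) :=
        Real.rpow_le_rpow_of_nonpos hrq (by linarith) (by linarith)
      calc F r ≤ r ^ N * (r ^ q) ^ (1 - s) :=
            mul_le_mul_of_nonneg_left a1 (by positivity)
        _ = r ^ (-(q * (s - 1) - N)) := by
            rw [← Real.rpow_natCast r N, ← Real.rpow_mul hr0.le, ← Real.rpow_add hr0]
            ring_nf
    · exact tendsto_rpow_neg_atTop ha
  have hcont : ContinuousWithinAt F (Ici 0) 0 := by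
    have c1 : ContinuousAt (fun x : ℝ => x ^ q) 0 :=
      Real.continuousAt_rpow_const 0 q (Or.inr hq0.le)
    have c2 : ContinuousAt (fun x : ℝ => 1 + x ^ q) 0 := continuousAt_const.add c1
    have hne : (fun x : ℝ => 1 + x ^ q) 0 ≠ 0 := by
      simp [Real.zero_rpow hq0.ne']
    exact (((continuous_pow N).continuousAt).mul (c2.rpow_const (Or.inl hne))).continuousWithinAt
  have hgint : IntegrableOn g (Ioi (0:ℝ)) := (hJ.const_mul _).add (hI.const_mul _)
  have key : ∫ r in Ioi (0:ℝ), g r = 0 - F 0 :=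
    integral_Ioi_of_hasDerivAt_of_tendsto hcont hderiv hgint htop
  have hF0 : F 0 = 0 := by
    simp [hF, zero_pow (by omega : N ≠ 0)]
  rw [hF0, sub_zero] at key
  rw [hg] at key
  rw [integral_add (hJ.const_mul _) (hI.const_mul _), integral_const_mul, integral_const_mul] at key
  set I := ∫ r in Ioi (0:ℝ), r ^ (N - 1) * (r ^ q * (1 + r ^ q) ^ (-s))
  set J := ∫ r in Ioi (0:ℝ), r ^ (N - 1) * (1 + r ^ q) ^ (-s)
  have : I * (q * (s - 1) - N) = (N:ℝ) * J := by linarith [key]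
  field_simp
  linarith [this]

lemma aux_bd {q s : ℝ} (hq : 0 < q) (hs : 1 ≤ s) {t : ℝ} (ht : 0 ≤ t) :
    t ^ q * (1 + t ^ q) ^ (-s) ≤ 2 ^ (q * (s - 1)) * (1 + t) ^ (-(q * (s - 1))) := by
  set r := q * (s - 1) with hrdef
  have hr0 : 0 ≤ r := mul_nonneg hq.le (by linarith)
  have hbase : (0:ℝ) < 1 + t ^ q := by positivity
  rcases le_total t 1 with h1 | h1
  · have a1 : t ^ q ≤ 1 := Real.rpow_le_one ht h1 hq.le
    have a2 : (1 + t ^ q) ^ (-s) ≤ 1 :=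
      Real.rpow_le_one_of_one_le_of_nonpos (by nlinarith [Real.rpow_nonneg ht q]) (by linarith)
    have a3 : (0:ℝ) ≤ (1 + t ^ q) ^ (-s) := Real.rpow_nonneg hbase.le _
    have lhs1 : t ^ q * (1 + t ^ q) ^ (-s) ≤ 1 := by nlinarith [Real.rpow_nonneg ht q]
    have b1 : (2:ℝ) ^ (-r) ≤ (1 + t) ^ (-r) :=
      Real.rpow_le_rpow_of_nonpos (by linarith) (by linarith) (neg_nonpos.2 hr0)
    calc t ^ q * (1 + t ^ q) ^ (-s) ≤ 1 := lhs1
      _ = 2 ^ r * 2 ^ (-r) := by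
          rw [← Real.rpow_add two_pos, add_neg_cancel, Real.rpow_zero]
      _ ≤ 2 ^ r * (1 + t) ^ (-r) :=
          mul_le_mul_of_nonneg_left b1 (Real.rpow_nonneg two_pos.le r)
  · have ht0 : (0:ℝ) < t := lt_of_lt_of_le one_pos h1
    have htq : (0:ℝ) < t ^ q := Real.rpow_pos_of_pos ht0 q
    have a1 : (1 + t ^ q) ^ (-s) ≤ (t ^ q) ^ (-s) :=
      Real.rpow_le_rpow_of_nonpos htq (by linarith) (by linarith)
    have lhs1 : t ^ q * (1 + t ^ q) ^ (-s) ≤ t ^ (-r) := by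
      calc t ^ q * (1 + t ^ q) ^ (-s) ≤ t ^ q * (t ^ q) ^ (-s) :=
            mul_le_mul_of_nonneg_left a1 htq.le
        _ = t ^ (-r) := by
            rw [← Real.rpow_mul ht, ← Real.rpow_add ht0]
            congr 1; rw [hrdef]; ring
    have b1 : (2 * t) ^ (-r) ≤ (1 + t) ^ (-r) :=
      Real.rpow_le_rpow_of_nonpos (by linarith) (by linarith) (neg_nonpos.2 hr0)
    have b2 : (2 * t) ^ (-r) = 2 ^ (-r) * t ^ (-r) :=
      Real.mul_rpow (by norm_num) ht0.le
    calc t ^ q * (1 + t ^ q) ^ (-s) ≤ t ^ (-r) := lhs1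
      _ = 2 ^ r * (2 * t) ^ (-r) := by
          rw [b2, ← mul_assoc, ← Real.rpow_add two_pos, add_neg_cancel, Real.rpow_zero, one_mul]
      _ ≤ 2 ^ r * (1 + t) ^ (-r) :=
          mul_le_mul_of_nonneg_left b1 (Real.rpow_nonneg two_pos.le _)

theorem stmt_2 (n m : ℕ) (hn : 2 ≤ n) (hm : 1 ≤ m) (p : ℝ) (hp1 : 1 < p) (hpn : p < n) :
    ((∫ y : EuclideanSpace ℝ (Fin (n + m)),
        ‖y‖ ^ (p / (p - 1)) * (1 + ‖y‖ ^ (p / (p - 1))) ^ (-(n : ℝ) - m / (p / (p - 1)))) =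
      (((n : ℝ) + m) * (p - 1) / ((n : ℝ) - p)) *
        ∫ y : EuclideanSpace ℝ (Fin (n + m)),
          (1 + ‖y‖ ^ (p / (p - 1))) ^ (-(n : ℝ) - m / (p / (p - 1)))) ∧
    MeasureTheory.Integrable (fun y : EuclideanSpace ℝ (Fin (n + m)) =>
      ‖y‖ ^ (p / (p - 1)) * (1 + ‖y‖ ^ (p / (p - 1))) ^ (-(n : ℝ) - m / (p / (p - 1)))) := by
  have hp0 : (0:ℝ) < p - 1 := by linarith
  have hpp : (0:ℝ) < p := by linarith
  have hnp : (0:ℝ) < (n:ℝ) - p := by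
    have : (2:ℝ) ≤ n := by exact_mod_cast hn
    linarith
  set q := p / (p - 1) with hqdef
  have hq1 : 1 < q := (one_lt_div hp0).mpr (by linarith)
  have hq0 : (0:ℝ) < q := lt_trans one_pos hq1
  set s : ℝ := (n:ℝ) + m / q with hsdef
  have e : -(n : ℝ) - (m : ℝ) / q = -s := by rw [hsdef]; ring
  rw [e]
  set N := n + m with hNdef
  have hN1 : 1 ≤ N := by omega
  have hqs : q * (s - 1) - (N:ℝ) = ((n:ℝ) - p) / (p - 1) := by
    rw [hsdef, hqdef, hNdef]
    push_cast
    field_simp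
    ring
  have hs1 : 1 < s := by
    rw [hsdef]
    have h3 : 0 < (m:ℝ) / q := div_pos (by exact_mod_cast hm) hq0
    have h4 : (2:ℝ) ≤ n := by exact_mod_cast hn
    linarith
  clear_value q s
  have hsN : (N:ℝ) < q * (s - 1) := by
    have h2 : (0:ℝ) < ((n:ℝ) - p) / (p - 1) := div_pos hnp hp0
    linarith
  set E := EuclideanSpace ℝ (Fin (n + m)) with hEdef
  haveI : Nonempty (Fin (n + m)) := ⟨⟨0, by omega⟩⟩
  haveI : Nontrivial E := inferInstance
  have dimE : Module.finrank ℝ E = N := finrank_euclideanSpace_fin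
  -- integrability
  have hcont : Continuous (fun y : E => ‖y‖ ^ q * (1 + ‖y‖ ^ q) ^ (-s)) := by
    refine (continuous_norm.rpow_const fun y => Or.inr hq0.le).mul ?_
    refine (continuous_const.add (continuous_norm.rpow_const fun y => Or.inr hq0.le)).rpow_const
      fun y => Or.inl ?_
    exact (by positivity : (0:ℝ) < 1 + ‖y‖ ^ q).ne'
  have hrN : (Module.finrank ℝ E : ℝ) < q * (s - 1) := by rw [dimE]; exact hsN
  have hint2 : Integrable (fun y : E => ‖y‖ ^ q * (1 + ‖y‖ ^ q) ^ (-s)) := by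
    refine ((integrable_one_add_norm hrN).const_mul ((2:ℝ) ^ (q * (s - 1)))).mono'
      hcont.aestronglyMeasurable (ae_of_all _ fun y => ?_)
    rw [Real.norm_eq_abs, abs_of_nonneg (by positivity)]
    exact aux_bd hq0 hs1.le (norm_nonneg y)
  refine ⟨?_, hint2⟩
  have A1 := integral_fun_norm_addHaar (volume : Measure E)
    (fun t : ℝ => t ^ q * (1 + t ^ q) ^ (-s))
  have A2 := integral_fun_norm_addHaar (volume : Measure E)
    (fun t : ℝ => (1 + t ^ q) ^ (-s))
  simp only [dimE, smul_eq_mul, nsmul_eq_mul] at A1 A2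
  rw [A1, A2, aux_eq N hN1 hq1 hsN]
  have hK : (N:ℝ) / (q * (s - 1) - N) = ((n:ℝ) + m) * (p - 1) / ((n:ℝ) - p) := by
    rw [hqs, hNdef]
    push_cast
    rw [div_div_eq_mul_div]
  rw [hK]
  ring
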